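/- Consider the 7-dimensional ℚ(q)-vector space W with basis {1,2,3,0,3̄,2̄,1̄} carrying the action e₁: 3↦2, 2̄↦3̄ (else 0); e₂: 2↦1, 0↦[2]_q·3, 3̄↦0, 1̄↦2̄ (else 0); f₁, f₂ given by the transposed rules (f₂·0 = [2]_q·3̄, f₂·3 = 0, f₂·1 = 2, f₂·2̄ = 1̄; f₁·2 = 3, f₁·3̄ = 2̄). Then with the symmetric bilinear form making the basis orthogonal with ‖j‖² = 1 for j ≠ 0 and ‖0‖² = 1 + q², the form satisfies the prepolarization conditions (e_i u, v) = (u, q_i^{-1} t_i^{-1} f_i v) for i = 1, 2 (with q₁ = q³, q₂ = q and the weights wt(1) = ϖ₂, wt(2) = ϖ₁-ϖ₂, wt(3) = -ϖ₁+2ϖ₂, wt(0) = 0, wt(j̄) = -wt(j)). -/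

import Mathlib

noncomputable section

abbrev K : Type := RatFunc ℚ

def qq : K := RatFunc.X

/-- `x` is a rational function without pole at `q = 0`. -/
def RegA (x : K) : Prop :=
  ∃ f g : Polynomial ℚ, Polynomial.eval 0 g ≠ 0 ∧
    x = algebraMap (Polynomial ℚ) K f / algebraMap (Polynomial ℚ) K g

/-- quantum integer `[n]_q` for `n : ℤ`. -/
def qint (n : ℤ) : K := (qq ^ n - qq ^ (-n)) / (qq - qq⁻¹)

/-- quantum factorial `[k]_q!`. -/
def qfac (k : ℕ) : K := ∏ j ∈ Finset.range k, qint ((j : ℤ) + 1)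

/-- Gaussian binomial coefficient `[m choose k]_q`, `m : ℤ`, `k : ℕ`. -/
def qbinom (m : ℤ) (k : ℕ) : K := (∏ j ∈ Finset.range k, qint (m - (j : ℤ))) / qfac k

/-- `[2]_q = q + q⁻¹`. -/
def tw : K := qq + qq⁻¹

/-- The 7-dimensional fundamental representation `W(ϖ₂)` of type `G₂⁽¹⁾`, with basis
ordered as `1, 2, 3, 0, 3̄, 2̄, 1̄` (indices `0,…,6`). -/
abbrev W : Type := Fin 7 → K

/-- `e₁ : 3 ↦ 2, 2̄ ↦ 3̄`. -/
def e1 (u : W) : W := ![0, u 2, 0, 0, u 5, 0, 0]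

/-- `e₂ : 2 ↦ 1, 0 ↦ [2]_q·3, 3̄ ↦ 0, 1̄ ↦ 2̄`. -/
def e2 (u : W) : W := ![u 1, 0, tw * u 3, u 4, 0, u 6, 0]

/-- `f₁ : 2 ↦ 3, 3̄ ↦ 2̄`. -/
def f1 (u : W) : W := ![0, 0, u 1, 0, 0, u 4, 0]

/-- `f₂ : 1 ↦ 2, 3 ↦ 0, 0 ↦ [2]_q·3̄, 2̄ ↦ 1̄`. -/
def f2 (u : W) : W := ![0, u 0, 0, u 2, tw * u 3, 0, u 5]

/-- `t₁⁻¹`, acting on a weight vector of weight `λ` by `q₁^{-⟨h₁,λ⟩}` with `q₁ = q³`. -/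
def t1inv (u : W) : W :=
  fun i => ![1, qq ^ (-3 : ℤ), qq ^ (3 : ℤ), 1, qq ^ (-3 : ℤ), qq ^ (3 : ℤ), 1] i * u i

/-- `t₂⁻¹`, acting on a weight vector of weight `λ` by `q₂^{-⟨h₂,λ⟩}` with `q₂ = q`. -/
def t2inv (u : W) : W :=
  fun i => ![qq ^ (-1 : ℤ), qq, qq ^ (-2 : ℤ), 1, qq ^ (2 : ℤ), qq ^ (-1 : ℤ), qq] i * u i

/-- The symmetric bilinear form making the basis orthogonal, with `‖j‖² = 1` for `j ≠ 0`
and `‖0‖² = 1 + q²`. -/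
def Bform (u v : W) : K := ∑ i, ![1, 1, 1, 1 + qq ^ 2, 1, 1, 1] i * u i * v i

/-- The form on the `G₂⁽¹⁾` fundamental representation `W(ϖ₂)` satisfies the
prepolarization conditions `(e_i u, v) = (u, q_i⁻¹ t_i⁻¹ f_i v)` for `i = 1, 2`,
with `q₁ = q³`, `q₂ = q`. -/
@[simp] lemma vec7_five (a b c d e f g : K) : ![a,b,c,d,e,f,g] 5 = f := rfl
@[simp] lemma vec7_six (a b c d e f g : K) : ![a,b,c,d,e,f,g] 6 = g := rfl

theorem Bform_prepolarization :
    (∀ u v : W, Bform (e1 u) v = qq ^ (-3 : ℤ) * Bform u (t1inv (f1 v))) ∧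
    (∀ u v : W, Bform (e2 u) v = qq ^ (-1 : ℤ) * Bform u (t2inv (f2 v))) := by
  have hq : qq ≠ 0 := RatFunc.X_ne_zero
  constructor <;> intro u v <;>
    simp only [zpow_neg, zpow_ofNat, Bform, e1, e2, f1, f2, t1inv, t2inv, tw, Fin.sum_univ_seven,
      Matrix.cons_val_zero, Matrix.cons_val_one, Matrix.head_cons,
      Matrix.cons_val_two, Matrix.tail_cons, Matrix.cons_val_three,
      Matrix.cons_val_four, Matrix.cons_val_fin_one, Matrix.cons_val',
      Matrix.cons_val_succ, Matrix.empty_val', Matrix.cons_val_fin_one, vec7_five, vec7_six] <;>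
    field_simp <;> ring
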